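/- Let Λ_1 ⊆ Λ_3 be two full-rank ℤ_p-lattices in ℚ_p^m and Λ_2 another full-rank lattice, where the distance between commensurable lattices Λ, Λ' is defined by p^{d(Λ,Λ')} = (Λ : Λ∩Λ')·(Λ' : Λ∩Λ'). Then d(Λ_1,Λ_2) + d(Λ_2,Λ_3) = d(Λ_1,Λ_3) if and only if Λ_1 ⊆ Λ_2 ⊆ Λ_3. -/

import Mathlib

section Aux

variable {p m : ℕ} [Fact p.Prime]

/-- Every element of `ℤ_p` is an integer plus a multiple of `p^N`. -/
lemma PadicLat.padic_decomp (N : ℕ) (c : ℤ_[p]) :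
    ∃ (a : ℤ) (d : ℤ_[p]), c = a + (p : ℤ_[p]) ^ N * d := by
  have hne : NeZero (p ^ N) := ⟨pow_ne_zero _ (Fact.out (p := p.Prime)).ne_zero⟩
  set x := PadicInt.toZModPow N c with hx
  refine ⟨(x.val : ℤ), ?_⟩
  have hker : c - ((x.val : ℤ) : ℤ_[p]) ∈ RingHom.ker (PadicInt.toZModPow (p := p) N) := by
    rw [RingHom.mem_ker, map_sub, map_intCast]
    push_cast
    rw [ZMod.natCast_val, ZMod.cast_id]
    simp [hx]
  rw [PadicInt.ker_toZModPow, Ideal.mem_span_singleton] at hker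
  obtain ⟨d, hd⟩ := hker
  exact ⟨d, by linear_combination hd⟩

/-- A finitely generated `ℤ_p`-module annihilated by `p^N` is finite. -/
lemma PadicLat.finite_of_fg_pow_smul (Q : Type*) [AddCommGroup Q] [Module ℤ_[p] Q]
    [Module.Finite ℤ_[p] Q] (N : ℕ) (hann : ∀ q : Q, (p : ℤ_[p]) ^ N • q = 0) : Finite Q := by
  obtain ⟨s, hs⟩ := Module.Finite.fg_top (R := ℤ_[p]) (M := Q)
  have hfg : AddGroup.FG Q := by
    rw [AddGroup.fg_iff]
    refine ⟨s, ?_, s.finite_toSet⟩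
    rw [eq_top_iff]
    intro q htop
    clear htop
    have hq : q ∈ Submodule.span ℤ_[p] (s : Set Q) := hs ▸ Submodule.mem_top
    induction hq using Submodule.span_induction with
    | mem x hx => exact AddSubgroup.subset_closure hx
    | zero => exact AddSubgroup.zero_mem _
    | add x y _ _ hx hy => exact AddSubgroup.add_mem _ hx hy
    | smul c x _ hx =>
        obtain ⟨a, d, hcd⟩ := PadicLat.padic_decomp N c
        have : c • x = (a : ℤ_[p]) • x + (p : ℤ_[p]) ^ N • (d • x) := by
          rw [hcd, add_smul, smul_smul]
        rw [this, hann (d • x), add_zero, Int.cast_smul_eq_zsmul]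
        exact AddSubgroup.zsmul_mem _ hx a
  have htor : AddMonoid.IsTorsion Q := by
    intro q
    rw [isOfFinAddOrder_iff_nsmul_eq_zero]
    refine ⟨p ^ N, pow_pos (Fact.out (p := p.Prime)).pos N, ?_⟩
    rw [← Nat.cast_smul_eq_nsmul ℤ_[p], Nat.cast_pow]
    exact hann q
  exact AddCommGroup.finite_of_fg_torsion Q htor

lemma PadicLat.exists_pow_smul_mem (L' : Submodule ℤ_[p] (Fin m → ℚ_[p])) (x : Fin m → ℚ_[p])
    (hx : x ∈ Submodule.span ℚ_[p] (L' : Set (Fin m → ℚ_[p]))) :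
    ∃ n : ℕ, (p : ℤ_[p]) ^ n • x ∈ L' := by
  induction hx using Submodule.span_induction with
  | mem y hy => exact ⟨0, by simpa using hy⟩
  | zero => exact ⟨0, by simp⟩
  | add y z _ _ hy hz =>
      obtain ⟨n, hn⟩ := hy
      obtain ⟨k, hk⟩ := hz
      refine ⟨n + k, ?_⟩
      have h1 : (p : ℤ_[p]) ^ (n + k) • (y + z)
          = (p : ℤ_[p]) ^ k • ((p : ℤ_[p]) ^ n • y) + (p : ℤ_[p]) ^ n • ((p : ℤ_[p]) ^ k • z) := by
        rw [smul_smul, smul_smul, ← pow_add, ← pow_add, smul_add, add_comm k n]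
      rw [h1]
      exact L'.add_mem (L'.smul_mem _ hn) (L'.smul_mem _ hk)
  | smul c y _ hy =>
      obtain ⟨n, hn⟩ := hy
      have hp1 : (1 : ℝ) < p := by exact_mod_cast (Fact.out (p := p.Prime)).one_lt
      obtain ⟨j, hj⟩ := pow_unbounded_of_one_lt ‖c‖ hp1
      have hz : ‖(p : ℚ_[p]) ^ j * c‖ ≤ 1 := by
        rw [norm_mul, norm_pow, Padic.norm_p, inv_pow,
          inv_mul_le_one₀ (by positivity)]
        exact hj.le
      set z : ℤ_[p] := ⟨(p : ℚ_[p]) ^ j * c, hz⟩ with hzdef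
      refine ⟨n + j, ?_⟩
      have key : (p : ℤ_[p]) ^ (n + j) • (c • y) = z • ((p : ℤ_[p]) ^ n • y) := by
        have hcoe : ∀ (w : ℤ_[p]) (v : Fin m → ℚ_[p]), w • v = (w : ℚ_[p]) • v := fun w v =>
          (IsScalarTower.algebraMap_smul ℚ_[p] w v).symm
        rw [hcoe, hcoe, hcoe, smul_smul, smul_smul]
        congr 1
        push_cast
        ring
      rw [key]
      exact L'.smul_mem z hn

lemma PadicLat.pow_smul_mem_mono (L' : Submodule ℤ_[p] (Fin m → ℚ_[p]))
    {x : Fin m → ℚ_[p]} {n N : ℕ}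
    (h : (p : ℤ_[p]) ^ n • x ∈ L') (hnN : n ≤ N) : (p : ℤ_[p]) ^ N • x ∈ L' := by
  have : (p : ℤ_[p]) ^ N • x = (p : ℤ_[p]) ^ (N - n) • ((p : ℤ_[p]) ^ n • x) := by
    rw [smul_smul, ← pow_add, Nat.sub_add_cancel hnN]
  rw [this]
  exact L'.smul_mem _ h

lemma PadicLat.exists_pow_smul_finset (L' : Submodule ℤ_[p] (Fin m → ℚ_[p]))
    (s : Finset (Fin m → ℚ_[p])) :
    ∃ N : ℕ, ∀ x ∈ s, (p : ℤ_[p]) ^ N • x ∈ L' ∨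
      x ∉ Submodule.span ℚ_[p] (L' : Set (Fin m → ℚ_[p])) := by
  classical
  induction s using Finset.induction with
  | empty => exact ⟨0, by simp⟩
  | insert a t hnotmem ih =>
      obtain ⟨N, hN⟩ := ih
      by_cases ha : a ∈ Submodule.span ℚ_[p] (L' : Set (Fin m → ℚ_[p]))
      · obtain ⟨n, hn⟩ := PadicLat.exists_pow_smul_mem L' a ha
        refine ⟨max n N, fun x hx => ?_⟩
        rcases Finset.mem_insert.mp hx with rfl | hx
        · exact Or.inl (PadicLat.pow_smul_mem_mono L' hn (le_max_left _ _))
        · rcases hN x hx with h | h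
          · exact Or.inl (PadicLat.pow_smul_mem_mono L' h (le_max_right _ _))
          · exact Or.inr h
      · refine ⟨N, fun x hx => ?_⟩
        rcases Finset.mem_insert.mp hx with rfl | hx
        · exact Or.inr ha
        · exact hN x hx

/-- For an fg lattice `L` and a full lattice `L'`, some `p`-power multiple of `L` lands in `L'`. -/
lemma PadicLat.exists_pow_smul_le (L L' : Submodule ℤ_[p] (Fin m → ℚ_[p])) (hfg : L.FG)
    (hfull' : Submodule.span ℚ_[p] (L' : Set (Fin m → ℚ_[p])) = ⊤) :
    ∃ N : ℕ, ∀ x ∈ L, (p : ℤ_[p]) ^ N • x ∈ L' := by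
  obtain ⟨s, hs⟩ := hfg
  obtain ⟨N, hN₀⟩ := PadicLat.exists_pow_smul_finset L' s
  have hN : ∀ x ∈ s, (p : ℤ_[p]) ^ N • x ∈ L' := by
    intro x hx
    rcases hN₀ x hx with h | h
    · exact h
    · exact absurd (by rw [hfull']; trivial) h
  refine ⟨N, fun x hx => ?_⟩
  have hx' : x ∈ Submodule.span ℤ_[p] (s : Set (Fin m → ℚ_[p])) := by rw [hs]; exact hx
  clear hx
  induction hx' using Submodule.span_induction with
  | mem y hy => exact hN y hy
  | zero => simp
  | add y z _ _ hy hz => rw [smul_add]; exact L'.add_mem hy hz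
  | smul c y _ hy => rw [smul_comm]; exact L'.smul_mem c hy

/-- Intersection of full lattices is full. -/
lemma PadicLat.span_inf_full (L L' : Submodule ℤ_[p] (Fin m → ℚ_[p]))
    (hN : ∃ N : ℕ, ∀ x ∈ L, (p : ℤ_[p]) ^ N • x ∈ L')
    (hfull : Submodule.span ℚ_[p] (L : Set (Fin m → ℚ_[p])) = ⊤) :
    Submodule.span ℚ_[p]
      ((L ⊓ L' : Submodule ℤ_[p] (Fin m → ℚ_[p])) : Set (Fin m → ℚ_[p])) = ⊤ := by
  obtain ⟨N, hN⟩ := hN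
  rw [eq_top_iff, ← hfull, Submodule.span_le]
  intro x hx
  have hmem : (p : ℤ_[p]) ^ N • x ∈ L ⊓ L' := ⟨L.smul_mem _ hx, hN x hx⟩
  have hxeq : x = ((p : ℚ_[p]) ^ N)⁻¹ • ((p : ℤ_[p]) ^ N • x) := by
    rw [← IsScalarTower.algebraMap_smul ℚ_[p] ((p : ℤ_[p]) ^ N), smul_smul, map_pow]
    have hp0 : ((p : ℚ_[p])) ≠ 0 := by
      exact_mod_cast (Fact.out (p := p.Prime)).ne_zero
    have hmap : (algebraMap ℤ_[p] ℚ_[p]) (p : ℤ_[p]) = (p : ℚ_[p]) := by push_cast; rfl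
    rw [hmap, inv_mul_cancel₀ (pow_ne_zero _ hp0), one_smul]
  rw [hxeq]
  exact Submodule.smul_mem _ _ (Submodule.subset_span hmem)

lemma PadicLat.toAddSubgroup_inf (A B : Submodule ℤ_[p] (Fin m → ℚ_[p])) :
    (A ⊓ B).toAddSubgroup = A.toAddSubgroup ⊓ B.toAddSubgroup := by
  ext x
  simp [Submodule.mem_toAddSubgroup]

end Aux

/-- The index `(Λ : Λ ∩ Λ')` of the intersection of two `ℤ_p`-lattices in `Λ`,
as the cardinality of the quotient module `Λ / (Λ ∩ Λ')`. -/
noncomputable def latIdx (p m : ℕ) [Fact p.Prime]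
    (L L' : Submodule ℤ_[p] (Fin m → ℚ_[p])) : ℕ :=
  Nat.card (↥L ⧸ (Submodule.comap L.subtype (L ⊓ L')))

section Aux2

variable {p m : ℕ} [Fact p.Prime]

lemma PadicLat.latIdx_eq (L L' : Submodule ℤ_[p] (Fin m → ℚ_[p])) :
    latIdx p m L L' = AddSubgroup.relIndex L'.toAddSubgroup L.toAddSubgroup := by
  have hK : (Submodule.comap L.subtype (L ⊓ L')).toAddSubgroup
      = L'.toAddSubgroup.addSubgroupOf L.toAddSubgroup := by
    ext x
    rw [AddSubgroup.mem_addSubgroupOf]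
    simp [x.2]
  rw [AddSubgroup.relIndex, AddSubgroup.index, ← hK]
  rfl

lemma PadicLat.latIdx_ne_zero (L L' : Submodule ℤ_[p] (Fin m → ℚ_[p])) (hfg : L.FG)
    (hfull' : Submodule.span ℚ_[p] (L' : Set (Fin m → ℚ_[p])) = ⊤) :
    latIdx p m L L' ≠ 0 := by
  obtain ⟨N, hN⟩ := PadicLat.exists_pow_smul_le L L' hfg hfull'
  set K := Submodule.comap L.subtype (L ⊓ L') with hKdef
  haveI : Module.Finite ℤ_[p] ↥L := (Module.Finite.iff_fg).mpr hfg
  have hann : ∀ q : (↥L ⧸ K), (p : ℤ_[p]) ^ N • q = 0 := by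
    intro q
    obtain ⟨y, rfl⟩ := Submodule.Quotient.mk_surjective K q
    rw [← Submodule.Quotient.mk_smul, Submodule.Quotient.mk_eq_zero]
    exact ⟨L.smul_mem _ y.2, hN y y.2⟩
  haveI : Finite (↥L ⧸ K) := PadicLat.finite_of_fg_pow_smul _ N hann
  rw [latIdx]
  exact Nat.card_ne_zero.mpr ⟨⟨0⟩, inferInstance⟩

end Aux2

/-- Let `Λ_1 ⊆ Λ_3` be full-rank `ℤ_p`-lattices in `ℚ_p^m` and `Λ_2` another
full-rank lattice.  With the distance `d(Λ,Λ')` defined by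
`p^{d(Λ,Λ')} = (Λ : Λ∩Λ')·(Λ' : Λ∩Λ')`, we have
`d(Λ_1,Λ_2) + d(Λ_2,Λ_3) = d(Λ_1,Λ_3)` if and only if `Λ_1 ⊆ Λ_2 ⊆ Λ_3`. -/
theorem stmt_5 (p m : ℕ) [Fact p.Prime]
    (L1 L2 L3 : Submodule ℤ_[p] (Fin m → ℚ_[p]))
    (hfg1 : L1.FG) (hfg2 : L2.FG) (hfg3 : L3.FG)
    (hfull1 : Submodule.span ℚ_[p] (L1 : Set (Fin m → ℚ_[p])) = ⊤)
    (hfull2 : Submodule.span ℚ_[p] (L2 : Set (Fin m → ℚ_[p])) = ⊤)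
    (hfull3 : Submodule.span ℚ_[p] (L3 : Set (Fin m → ℚ_[p])) = ⊤)
    (h13 : L1 ≤ L3)
    (e12 e23 e13 : ℕ)
    (he12 : p ^ e12 = latIdx p m L1 L2 * latIdx p m L2 L1)
    (he23 : p ^ e23 = latIdx p m L2 L3 * latIdx p m L3 L2)
    (he13 : p ^ e13 = latIdx p m L1 L3 * latIdx p m L3 L1) :
    e12 + e23 = e13 ↔ (L1 ≤ L2 ∧ L2 ≤ L3) := by
  have hp := Fact.out (p := p.Prime)
  set H1 := L1.toAddSubgroup with hH1
  set H2 := L2.toAddSubgroup with hH2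
  set H3 := L3.toAddSubgroup with hH3
  set M : AddSubgroup (Fin m → ℚ_[p]) := H1 ⊓ H2 ⊓ H3 with hM
  set s12 := latIdx p m L1 L2
  set s21 := latIdx p m L2 L1
  set s23 := latIdx p m L2 L3
  set s32 := latIdx p m L3 L2
  set s13 := latIdx p m L1 L3
  set s31 := latIdx p m L3 L1
  have hrel12 : s12 = AddSubgroup.relIndex H2 H1 := PadicLat.latIdx_eq L1 L2
  have hrel21 : s21 = AddSubgroup.relIndex H1 H2 := PadicLat.latIdx_eq L2 L1
  have hrel23 : s23 = AddSubgroup.relIndex H3 H2 := PadicLat.latIdx_eq L2 L3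
  have hrel32 : s32 = AddSubgroup.relIndex H2 H3 := PadicLat.latIdx_eq L3 L2
  have hrel13 : s13 = AddSubgroup.relIndex H3 H1 := PadicLat.latIdx_eq L1 L3
  have hrel31 : s31 = AddSubgroup.relIndex H1 H3 := PadicLat.latIdx_eq L3 L1
  have hle13 : H1 ≤ H3 := fun x hx => h13 hx
  have hs13 : s13 = 1 := by rw [hrel13]; exact AddSubgroup.relIndex_eq_one.mpr hle13
  -- the three "relative covolumes"
  set a1 := M.relIndex H1 with ha1
  set a2 := M.relIndex H2 with ha2
  set a3 := M.relIndex H3 with ha3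
  set m12 := M.relIndex (H1 ⊓ H2) with hm12
  set m23 := M.relIndex (H2 ⊓ H3) with hm23
  set m13 := M.relIndex (H1 ⊓ H3) with hm13
  -- tower identities
  have hM12 : M ≤ H1 ⊓ H2 := inf_le_left
  have hM3 : M ≤ H3 := inf_le_right
  have hM1 : M ≤ H1 := le_trans hM12 inf_le_left
  have hM2 : M ≤ H2 := le_trans hM12 inf_le_right
  have hM23 : M ≤ H2 ⊓ H3 := le_inf hM2 hM3
  have hM13 : M ≤ H1 ⊓ H3 := le_inf hM1 hM3
  have t1 : m12 * s12 = a1 := by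
    rw [hm12, ha1, hrel12, ← AddSubgroup.inf_relIndex_left H1 H2]
    exact AddSubgroup.relIndex_mul_relIndex M (H1 ⊓ H2) H1 hM12 inf_le_left
  have t2 : m12 * s21 = a2 := by
    rw [hm12, ha2, hrel21, ← AddSubgroup.inf_relIndex_right H1 H2]
    exact AddSubgroup.relIndex_mul_relIndex M (H1 ⊓ H2) H2 hM12 inf_le_right
  have t3 : m23 * s23 = a2 := by
    rw [hm23, ha2, hrel23, ← AddSubgroup.inf_relIndex_left H2 H3]
    exact AddSubgroup.relIndex_mul_relIndex M (H2 ⊓ H3) H2 hM23 inf_le_left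
  have t4 : m23 * s32 = a3 := by
    rw [hm23, ha3, hrel32, ← AddSubgroup.inf_relIndex_right H2 H3]
    exact AddSubgroup.relIndex_mul_relIndex M (H2 ⊓ H3) H3 hM23 inf_le_right
  have t5 : m13 * s13 = a1 := by
    rw [hm13, ha1, hrel13, ← AddSubgroup.inf_relIndex_left H1 H3]
    exact AddSubgroup.relIndex_mul_relIndex M (H1 ⊓ H3) H1 hM13 inf_le_left
  have t6 : m13 * s31 = a3 := by
    rw [hm13, ha3, hrel31, ← AddSubgroup.inf_relIndex_right H1 H3]
    exact AddSubgroup.relIndex_mul_relIndex M (H1 ⊓ H3) H3 hM13 inf_le_right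
  -- a1 ≠ 0
  have ha1ne : a1 ≠ 0 := by
    have hfullinf : Submodule.span ℚ_[p] ((L2 ⊓ L3 : Submodule ℤ_[p] (Fin m → ℚ_[p])) :
        Set (Fin m → ℚ_[p])) = ⊤ :=
      PadicLat.span_inf_full L2 L3 (PadicLat.exists_pow_smul_le L2 L3 hfg2 hfull3) hfull2
    have h0 : latIdx p m L1 (L2 ⊓ L3) ≠ 0 := PadicLat.latIdx_ne_zero L1 (L2 ⊓ L3) hfg1 hfullinf
    have heq : latIdx p m L1 (L2 ⊓ L3) = a1 := by
      rw [PadicLat.latIdx_eq, ha1, hM, PadicLat.toAddSubgroup_inf, ← hH2, ← hH3,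
        inf_assoc, AddSubgroup.inf_relIndex_left]
    rwa [heq] at h0
  -- key cancellation : s12 * s23 * s31 = s21 * s32
  have hchain : (s12 * s23 * s31) * a1 = (s21 * s32) * a1 := by
    have e1 : s12 * a2 = s21 * a1 := by rw [← t1, ← t2]; ring
    have e2 : s23 * a3 = s32 * a2 := by rw [← t3, ← t4]; ring
    have e3 : a3 = s31 * a1 := by rw [← t6, ← t5, hs13]; ring
    calc (s12 * s23 * s31) * a1 = s12 * (s23 * (s31 * a1)) := by ring
      _ = s12 * (s23 * a3) := by rw [← e3]
      _ = s12 * (s32 * a2) := by rw [e2]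
      _ = s32 * (s12 * a2) := by ring
      _ = s32 * (s21 * a1) := by rw [e1]
      _ = (s21 * s32) * a1 := by ring
  have hkey : s12 * s23 * s31 = s21 * s32 := Nat.eq_of_mul_eq_mul_right (Nat.pos_of_ne_zero ha1ne) hchain
  -- master identity
  have hmaster : p ^ (e12 + e23) = (s12 * s23) ^ 2 * p ^ e13 := by
    rw [pow_add, he12, he23, he13, hs13, one_mul]
    calc s12 * s21 * (s23 * s32) = (s12 * s23) * (s21 * s32) := by ring
      _ = (s12 * s23) * (s12 * s23 * s31) := by rw [hkey]
      _ = (s12 * s23) ^ 2 * s31 := by ring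
  have hp13pos : 0 < p ^ e13 := pow_pos hp.pos _
  constructor
  · intro h
    rw [h] at hmaster
    have hsq : (s12 * s23) ^ 2 = 1 :=
      Nat.eq_of_mul_eq_mul_right hp13pos (by rw [← hmaster, one_mul])
    have hone : s12 * s23 = 1 := (pow_eq_one_iff.mp hsq).resolve_right two_ne_zero
    have h12 : s12 = 1 := Nat.eq_one_of_mul_eq_one_right hone
    have h23 : s23 = 1 := Nat.eq_one_of_mul_eq_one_left hone
    constructor
    · intro x hx
      have : H1 ≤ H2 := AddSubgroup.relIndex_eq_one.mp (by rw [← hrel12]; exact h12)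
      exact this hx
    · intro x hx
      have : H2 ≤ H3 := AddSubgroup.relIndex_eq_one.mp (by rw [← hrel23]; exact h23)
      exact this hx
  · rintro ⟨h12, h23⟩
    have hs12 : s12 = 1 := by
      rw [hrel12]; exact AddSubgroup.relIndex_eq_one.mpr (fun x hx => h12 hx)
    have hs23 : s23 = 1 := by
      rw [hrel23]; exact AddSubgroup.relIndex_eq_one.mpr (fun x hx => h23 hx)
    rw [hs12, hs23] at hmaster
    simp only [mul_one, one_pow, one_mul] at hmaster
    exact Nat.pow_right_injective hp.two_le hmaster
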